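/- The function φ(z) = 2(e^z − 1 − z)/z² (with φ(0) = 1) is monotone increasing on [0, ∞). -/

import Mathlib

noncomputable def φ (z : ℝ) : ℝ :=
  if z = 0 then 1 else 2 * (Real.exp z - 1 - z) / z ^ 2

lemma phi_summable (z : ℝ) :
    Summable (fun j : ℕ => 2 * z ^ j / (j + 2).factorial) := by
  apply Summable.of_norm_bounded (g := fun j : ℕ => 2 * (|z| ^ j / j.factorial))
    ((Real.summable_pow_div_factorial |z|).mul_left 2)
  intro j
  rw [Real.norm_eq_abs, abs_div, abs_mul, abs_pow, abs_two]
  rw [abs_of_nonneg (by positivity : (0:ℝ) ≤ ((j + 2).factorial : ℝ)), mul_div_assoc]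
  have h : ((j.factorial : ℝ)) ≤ ((j + 2).factorial : ℝ) := by
    exact_mod_cast Nat.factorial_le (by omega)
  gcongr


lemma phi_eq (z : ℝ) : φ z = ∑' j : ℕ, 2 * z ^ j / (j + 2).factorial := by
  unfold φ
  by_cases hz : z = 0
  · subst hz
    simp only [if_pos rfl]
    rw [tsum_eq_single 0 (by intro j hj; simp [zero_pow hj])]
    norm_num
  · rw [if_neg hz]
    have hexp : Real.exp z = ∑' n : ℕ, z ^ n / n.factorial := by
      rw [Real.exp_eq_exp_ℝ, NormedSpace.exp_eq_tsum_div]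
    have hsum := Real.summable_pow_div_factorial z
    have hshift := Summable.sum_add_tsum_nat_add 2 hsum
    have h2 : ∑' j : ℕ, z ^ (j + 2) / (j + 2).factorial = Real.exp z - 1 - z := by
      rw [hexp, ← hshift]
      simp [Finset.sum_range_succ]
      ring
    have : (fun j : ℕ => 2 * z ^ j / (j + 2).factorial) =
        fun j : ℕ => (2 / z ^ 2) * (z ^ (j + 2) / (j + 2).factorial) := by
      funext j
      rw [pow_add]
      field_simp
    rw [this, tsum_mul_left, h2]
    field_simp

theorem phi_monotoneOn : MonotoneOn φ (Set.Ici 0) := by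
  intro x hx y hy hxy
  rw [phi_eq, phi_eq]
  apply Summable.tsum_le_tsum _ (phi_summable x) (phi_summable y)
  intro j
  gcongr
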